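/- Let G be a subgroup of Z^d, let M and N be submonoids of G, and let a, b ∈ Z^d be such that the cosets a + M and b + N are disjoint. Let K be the subgroup of Z^d generated by M ∩ N. Then no coset of K intersects both a + M and b + N. -/

import Mathlib

/-- Every element of the closure of an intersection of two submonoids is a
difference of two elements of the intersection. -/
lemma closure_inter_diff {d : ℕ} (M N : AddSubmonoid (Fin d → ℤ))
    {k : Fin d → ℤ}
    (hk : k ∈ AddSubgroup.closure ((M : Set (Fin d → ℤ)) ∩ N)) :
    ∃ y y', y ∈ (M : Set (Fin d → ℤ)) ∩ N ∧ y' ∈ (M : Set (Fin d → ℤ)) ∩ N ∧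
      k = y' - y := by
  induction hk using AddSubgroup.closure_induction with
  | mem x hx => exact ⟨0, x, ⟨M.zero_mem, N.zero_mem⟩, hx, by simp⟩
  | zero => exact ⟨0, 0, ⟨M.zero_mem, N.zero_mem⟩, ⟨M.zero_mem, N.zero_mem⟩, by simp⟩
  | add x z hx hz ihx ihz =>
    obtain ⟨y1, y1', ⟨h1M, h1N⟩, ⟨h1M', h1N'⟩, e1⟩ := ihx
    obtain ⟨y2, y2', ⟨h2M, h2N⟩, ⟨h2M', h2N'⟩, e2⟩ := ihz
    exact ⟨y1 + y2, y1' + y2', ⟨M.add_mem h1M h2M, N.add_mem h1N h2N⟩,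
      ⟨M.add_mem h1M' h2M', N.add_mem h1N' h2N'⟩, by rw [e1, e2]; abel⟩
  | neg x hx ihx =>
    obtain ⟨y, y', hy, hy', e⟩ := ihx
    exact ⟨y', y, hy', hy, by rw [e]; abel⟩

/-- If the monoid cosets a + M and b + N are disjoint, then no coset of the
group K generated by M ∩ N intersects both a + M and b + N. -/
theorem no_coset_meets_both {d : ℕ} (G : AddSubgroup (Fin d → ℤ))
    (M N : AddSubmonoid (Fin d → ℤ))
    (hM : (M : Set (Fin d → ℤ)) ⊆ G) (hN : (N : Set (Fin d → ℤ)) ⊆ G)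
    (a b : Fin d → ℤ)
    (hdisj : Disjoint ((fun m => a + m) '' (M : Set (Fin d → ℤ)))
                      ((fun m => b + m) '' (N : Set (Fin d → ℤ)))) :
    ∀ v : Fin d → ℤ,
      ¬ (∃ p, p ∈ (fun m => v + m) '' (AddSubgroup.closure ((M : Set (Fin d → ℤ)) ∩ N) : Set (Fin d → ℤ)) ∧
              p ∈ (fun m => a + m) '' (M : Set (Fin d → ℤ))) ∨
      ¬ (∃ q, q ∈ (fun m => v + m) '' (AddSubgroup.closure ((M : Set (Fin d → ℤ)) ∩ N) : Set (Fin d → ℤ)) ∧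
              q ∈ (fun m => b + m) '' (N : Set (Fin d → ℤ))) := by
  intro v
  by_contra h
  push_neg at h
  obtain ⟨⟨p, ⟨k1, hk1, hpk⟩, ⟨m, hm, hpm⟩⟩, ⟨q, ⟨k2, hk2, hqk⟩, ⟨n, hn, hqn⟩⟩⟩ := h
  obtain ⟨y, y', ⟨hyM, hyN⟩, ⟨hyM', hyN'⟩, e⟩ :=
    closure_inter_diff M N (AddSubgroup.sub_mem _ hk2 hk1)
  have key : a + (m + y') = b + (n + y) := by
    have h1 : a + m = v + k1 := hpm.trans hpk.symm
    have h2 : b + n = v + k2 := hqn.trans hqk.symm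
    have hkeq : k1 + y' = k2 + y := by
      have h := sub_eq_sub_iff_add_eq_add.mp e
      rw [h]; abel
    calc a + (m + y') = v + (k1 + y') := by rw [← add_assoc, h1]; abel
      _ = v + (k2 + y) := by rw [hkeq]
      _ = b + (n + y) := by rw [← add_assoc, ← h2]; abel
  exact Set.disjoint_left.mp hdisj
    ⟨m + y', M.add_mem hm hyM', rfl⟩
    ⟨n + y, N.add_mem hn hyN, key.symm⟩
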